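/- Fix real k₁, k₂ and complex z, z′. Define φ̃(x,y) = exp(−(1+2k₂)x²/4 − (1−2k₁)y²/4) · exp(((z′ + i z)x + (z + i z′)y)/√2) and Ψ̃(x,y) = exp(−(1−2k₂)x²/4 − (1+2k₁)y²/4) · exp(((z′ + i z)x + (z + i z′)y)/√2). Then identically on ℝ²: A φ̃ = z φ̃, A′ φ̃ = z′ φ̃, B† Ψ̃ = z Ψ̃, and B′† Ψ̃ = z′ Ψ̃. -/

import Mathlib

open MeasureTheory

/-- Partial derivative in the `x`-direction of a function on `ℝ²`. -/
noncomputable def pdx (f : ℝ × ℝ → ℂ) : ℝ × ℝ → ℂ := fun p => fderiv ℝ f p (1, 0)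

/-- Partial derivative in the `y`-direction of a function on `ℝ²`. -/
noncomputable def pdy (f : ℝ × ℝ → ℂ) : ℝ × ℝ → ℂ := fun p => fderiv ℝ f p (0, 1)

/-- `A f = (1/√2)(−i ∂ₓ f + ∂_y f + (−(i x/2)(1+2k₂) + (y/2)(1−2k₁)) f)`. -/
noncomputable def Agll (k₁ k₂ : ℝ) (f : ℝ × ℝ → ℂ) : ℝ × ℝ → ℂ := fun p =>
  (Real.sqrt 2 : ℂ)⁻¹ * (-Complex.I * pdx f p + pdy f p +
    (-(Complex.I * (p.1 : ℂ) / 2) * (1 + 2 * (k₂ : ℂ)) +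
      ((p.2 : ℂ) / 2) * (1 - 2 * (k₁ : ℂ))) * f p)

/-- `A′ f = (1/√2)(∂ₓ f − i ∂_y f + ((x/2)(1+2k₂) − (i y/2)(1−2k₁)) f)`. -/
noncomputable def A'gll (k₁ k₂ : ℝ) (f : ℝ × ℝ → ℂ) : ℝ × ℝ → ℂ := fun p =>
  (Real.sqrt 2 : ℂ)⁻¹ * (pdx f p - Complex.I * pdy f p +
    (((p.1 : ℂ) / 2) * (1 + 2 * (k₂ : ℂ)) -
      (Complex.I * (p.2 : ℂ) / 2) * (1 - 2 * (k₁ : ℂ))) * f p)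

/-- `B† f = (1/√2)(−i ∂ₓ f + ∂_y f + (−(i x/2)(1−2k₂) + (y/2)(1+2k₁)) f)`. -/
noncomputable def Bdag (k₁ k₂ : ℝ) (f : ℝ × ℝ → ℂ) : ℝ × ℝ → ℂ := fun p =>
  (Real.sqrt 2 : ℂ)⁻¹ * (-Complex.I * pdx f p + pdy f p +
    (-(Complex.I * (p.1 : ℂ) / 2) * (1 - 2 * (k₂ : ℂ)) +
      ((p.2 : ℂ) / 2) * (1 + 2 * (k₁ : ℂ))) * f p)

/-- `B′† f = (1/√2)(∂ₓ f − i ∂_y f + ((x/2)(1−2k₂) − (i y/2)(1+2k₁)) f)`. -/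
noncomputable def B'dag (k₁ k₂ : ℝ) (f : ℝ × ℝ → ℂ) : ℝ × ℝ → ℂ := fun p =>
  (Real.sqrt 2 : ℂ)⁻¹ * (pdx f p - Complex.I * pdy f p +
    (((p.1 : ℂ) / 2) * (1 - 2 * (k₂ : ℂ)) -
      (Complex.I * (p.2 : ℂ) / 2) * (1 + 2 * (k₁ : ℂ))) * f p)

/-- `φ̃(x,y) = exp(−(1+2k₂)x²/4 − (1−2k₁)y²/4) · exp(((z′+iz)x + (z+iz′)y)/√2)`. -/
noncomputable def phiTil (k₁ k₂ : ℝ) (z z' : ℂ) : ℝ × ℝ → ℂ := fun p =>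
  Complex.exp (-(1 + 2 * (k₂ : ℂ)) * (p.1 : ℂ) ^ 2 / 4 -
      (1 - 2 * (k₁ : ℂ)) * (p.2 : ℂ) ^ 2 / 4) *
    Complex.exp (((z' + Complex.I * z) * (p.1 : ℂ) +
      (z + Complex.I * z') * (p.2 : ℂ)) / (Real.sqrt 2 : ℂ))

/-- `Ψ̃(x,y) = exp(−(1−2k₂)x²/4 − (1+2k₁)y²/4) · exp(((z′+iz)x + (z+iz′)y)/√2)`. -/
noncomputable def psiTil (k₁ k₂ : ℝ) (z z' : ℂ) : ℝ × ℝ → ℂ := fun p =>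
  Complex.exp (-(1 - 2 * (k₂ : ℂ)) * (p.1 : ℂ) ^ 2 / 4 -
      (1 + 2 * (k₁ : ℂ)) * (p.2 : ℂ) ^ 2 / 4) *
    Complex.exp (((z' + Complex.I * z) * (p.1 : ℂ) +
      (z + Complex.I * z') * (p.2 : ℂ)) / (Real.sqrt 2 : ℂ))


lemma pdx_cexp_quad (a b c d : ℂ) (p : ℝ × ℝ) :
    pdx (fun q : ℝ × ℝ => Complex.exp (a * (q.1 : ℂ) ^ 2 + b * (q.2 : ℂ) ^ 2 +
      c * (q.1 : ℂ) + d * (q.2 : ℂ))) p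
    = (2 * a * (p.1 : ℂ) + c) * Complex.exp (a * (p.1 : ℂ) ^ 2 + b * (p.2 : ℂ) ^ 2 +
      c * (p.1 : ℂ) + d * (p.2 : ℂ)) := by
  have hX : HasFDerivAt (fun q : ℝ × ℝ => ((q.1 : ℝ) : ℂ))
      (Complex.ofRealCLM.comp (ContinuousLinearMap.fst ℝ ℝ ℝ)) p :=
    Complex.ofRealCLM.hasFDerivAt.comp p (hasFDerivAt_fst)
  have hY : HasFDerivAt (fun q : ℝ × ℝ => ((q.2 : ℝ) : ℂ))
      (Complex.ofRealCLM.comp (ContinuousLinearMap.snd ℝ ℝ ℝ)) p :=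
    Complex.ofRealCLM.hasFDerivAt.comp p (hasFDerivAt_snd)
  have h := ((((((hX.mul hX).const_mul a).add (((hY.mul hY)).const_mul b)).add
    (hX.const_mul c)).add (hY.const_mul d)).cexp)
  simp only [← pow_two, Pi.add_apply, Pi.pow_apply] at h
  rw [pdx, h.fderiv]
  simp
  ring

lemma pdy_cexp_quad (a b c d : ℂ) (p : ℝ × ℝ) :
    pdy (fun q : ℝ × ℝ => Complex.exp (a * (q.1 : ℂ) ^ 2 + b * (q.2 : ℂ) ^ 2 +
      c * (q.1 : ℂ) + d * (q.2 : ℂ))) p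
    = (2 * b * (p.2 : ℂ) + d) * Complex.exp (a * (p.1 : ℂ) ^ 2 + b * (p.2 : ℂ) ^ 2 +
      c * (p.1 : ℂ) + d * (p.2 : ℂ)) := by
  have hX : HasFDerivAt (fun q : ℝ × ℝ => ((q.1 : ℝ) : ℂ))
      (Complex.ofRealCLM.comp (ContinuousLinearMap.fst ℝ ℝ ℝ)) p :=
    Complex.ofRealCLM.hasFDerivAt.comp p (hasFDerivAt_fst)
  have hY : HasFDerivAt (fun q : ℝ × ℝ => ((q.2 : ℝ) : ℂ))
      (Complex.ofRealCLM.comp (ContinuousLinearMap.snd ℝ ℝ ℝ)) p :=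
    Complex.ofRealCLM.hasFDerivAt.comp p (hasFDerivAt_snd)
  have h := ((((((hX.mul hX).const_mul a).add (((hY.mul hY)).const_mul b)).add
    (hX.const_mul c)).add (hY.const_mul d)).cexp)
  simp only [← pow_two, Pi.add_apply, Pi.pow_apply] at h
  rw [pdy, h.fderiv]
  simp
  ring

lemma phiTil_eq (k₁ k₂ : ℝ) (z z' : ℂ) : phiTil k₁ k₂ z z' =
    fun q : ℝ × ℝ => Complex.exp ((-(1 + 2 * (k₂ : ℂ)) / 4) * (q.1 : ℂ) ^ 2 +
      (-(1 - 2 * (k₁ : ℂ)) / 4) * (q.2 : ℂ) ^ 2 +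
      ((z' + Complex.I * z) / (Real.sqrt 2 : ℂ)) * (q.1 : ℂ) +
      ((z + Complex.I * z') / (Real.sqrt 2 : ℂ)) * (q.2 : ℂ)) := by
  funext q
  rw [phiTil, ← Complex.exp_add]
  congr 1
  ring

lemma psiTil_eq (k₁ k₂ : ℝ) (z z' : ℂ) : psiTil k₁ k₂ z z' =
    fun q : ℝ × ℝ => Complex.exp ((-(1 - 2 * (k₂ : ℂ)) / 4) * (q.1 : ℂ) ^ 2 +
      (-(1 + 2 * (k₁ : ℂ)) / 4) * (q.2 : ℂ) ^ 2 +
      ((z' + Complex.I * z) / (Real.sqrt 2 : ℂ)) * (q.1 : ℂ) +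
      ((z + Complex.I * z') / (Real.sqrt 2 : ℂ)) * (q.2 : ℂ)) := by
  funext q
  rw [psiTil, ← Complex.exp_add]
  congr 1
  ring

lemma sqrt2_sq : (Real.sqrt 2 : ℂ) * (Real.sqrt 2 : ℂ) = 2 := by
  rw [← Complex.ofReal_mul, Real.mul_self_sqrt (by norm_num)]
  norm_num

lemma sqrt2_ne : (Real.sqrt 2 : ℂ) ≠ 0 := by
  simpa using (Real.sqrt_ne_zero'.mpr (by norm_num : (0:ℝ) < 2))

theorem statement15 (k₁ k₂ : ℝ) (z z' : ℂ) :
    (Agll k₁ k₂ (phiTil k₁ k₂ z z') = fun p => z * phiTil k₁ k₂ z z' p) ∧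
    (A'gll k₁ k₂ (phiTil k₁ k₂ z z') = fun p => z' * phiTil k₁ k₂ z z' p) ∧
    (Bdag k₁ k₂ (psiTil k₁ k₂ z z') = fun p => z * psiTil k₁ k₂ z z' p) ∧
    (B'dag k₁ k₂ (psiTil k₁ k₂ z z') = fun p => z' * psiTil k₁ k₂ z z' p) := by
  have h3 : (Real.sqrt 2 : ℂ)⁻¹ * (Real.sqrt 2 : ℂ)⁻¹ = 1/2 := by
    rw [← mul_inv, sqrt2_sq]; norm_num
  have hI : Complex.I * Complex.I = -1 := Complex.I_mul_I
  refine ⟨?_, ?_, ?_, ?_⟩ <;> funext p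
  · simp only [Agll, phiTil_eq, pdx_cexp_quad, pdy_cexp_quad]
    set E := Complex.exp _
    linear_combination z * (1 - Complex.I * Complex.I) * E * h3 - (z * E / 2) * hI
  · simp only [A'gll, phiTil_eq, pdx_cexp_quad, pdy_cexp_quad]
    set E := Complex.exp _
    linear_combination z' * (1 - Complex.I * Complex.I) * E * h3 - (z' * E / 2) * hI
  · simp only [Bdag, psiTil_eq, pdx_cexp_quad, pdy_cexp_quad]
    set E := Complex.exp _
    linear_combination z * (1 - Complex.I * Complex.I) * E * h3 - (z * E / 2) * hI
  · simp only [B'dag, psiTil_eq, pdx_cexp_quad, pdy_cexp_quad]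
    set E := Complex.exp _
    linear_combination z' * (1 - Complex.I * Complex.I) * E * h3 - (z' * E / 2) * hI
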